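/- If G is a finite simple graph with no isolated vertices and S is a total forcing set of G, then S contains every strong support vertex of G, and for every strong support vertex v of G, at most one leaf neighbor of v lies outside S (i.e., S contains all except possibly one of the leaf neighbors of v). -/
import Mathlib


/-! Basic definitions: (zero) forcing, total forcing, forcing numbers. -/

namespace TotalForcing

variable {V : Type*}

/-- The set of vertices eventually colored by the forcing process starting from `S`:
a vertex is colored if it is in `S`, or if some colored vertex `u` is adjacent to it
while all other neighbors of `u` are already colored (so `v` is the unique
non-colored neighbor of `u`, and `u` forces `v`). -/
inductive Forces (G : SimpleGraph V) (S : Set V) : V → Prop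
  | mem : ∀ {v : V}, v ∈ S → Forces G S v
  | force : ∀ {u v : V}, G.Adj u v → Forces G S u →
      (∀ w, G.Adj u w → w ≠ v → Forces G S w) → Forces G S v

/-- `S` is a forcing set of `G` if the forcing process colors every vertex. -/
def IsForcingSet (G : SimpleGraph V) (S : Set V) : Prop := ∀ v : V, Forces G S v

/-- A total forcing set is a forcing set inducing a subgraph without isolated vertices. -/
def IsTotalForcingSet (G : SimpleGraph V) (S : Set V) : Prop :=
  IsForcingSet G S ∧ ∀ v ∈ S, ∃ u ∈ S, G.Adj v u

/-- The forcing number `F(G)`. -/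
noncomputable def forcingNumber (G : SimpleGraph V) [Fintype V] : ℕ :=
  sInf {n : ℕ | ∃ S : Finset V, S.card = n ∧ IsForcingSet G ↑S}

/-- The total forcing number `F_t(G)`. -/
noncomputable def totalForcingNumber (G : SimpleGraph V) [Fintype V] : ℕ :=
  sInf {n : ℕ | ∃ S : Finset V, S.card = n ∧ IsTotalForcingSet G ↑S}

/-- A leaf is a vertex of degree 1. -/
def IsLeaf (G : SimpleGraph V) (v : V) : Prop := (G.neighborSet v).ncard = 1

/-- The number of leaves of `G`. -/
noncomputable def numLeaves (G : SimpleGraph V) : ℕ := {v : V | IsLeaf G v}.ncard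

/-- A strong support vertex is a vertex with at least two leaf neighbors. -/
def IsStrongSupport (G : SimpleGraph V) (v : V) : Prop :=
  ∃ x y : V, x ≠ y ∧ G.Adj v x ∧ G.Adj v y ∧ IsLeaf G x ∧ IsLeaf G y

end TotalForcing

namespace TotalForcing

lemma leaf_unique {V : Type*} {G : SimpleGraph V} {x u v : V}
    (hx : IsLeaf G x) (hu : G.Adj x u) (hv : G.Adj x v) : u = v := by
  obtain ⟨a, ha⟩ := Set.ncard_eq_one.mp hx
  have h1 : u ∈ G.neighborSet x := hu
  have h2 : v ∈ G.neighborSet x := hv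
  rw [ha] at h1 h2
  simp at h1 h2
  rw [h1, h2]

lemma aux {V : Type*} (G : SimpleGraph V) (S : Set V) (v : V) :
    ∀ x, Forces G S x →
      (x ∉ S ∧ IsLeaf G x ∧ G.Adj v x ∧
        ∃ y, y ≠ x ∧ G.Adj v y ∧ IsLeaf G y ∧ y ∉ S) → False := by
  intro x hx
  induction hx with
  | mem h => rintro ⟨hxS, _⟩; exact hxS h
  | @force u z hadj hu hall ihu ih =>
    rintro ⟨hzS, hleaf, hvz, y, hyz, hvy, hyleaf, hyS⟩
    have huv : u = v := leaf_unique hleaf hadj.symm hvz.symm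
    subst huv
    exact ih y hvy hyz ⟨hyS, hyleaf, hvy, z, Ne.symm hyz, hvz, hleaf, hzS⟩

/-- If `G` has no isolated vertices and `S` is a total forcing set of
`G`, then `S` contains every strong support vertex of `G`, and for every strong support
vertex `v`, at most one leaf neighbor of `v` lies outside `S`. -/
theorem stmt14 {V : Type*} [Fintype V] (G : SimpleGraph V)
    (hiso : ∀ v : V, ∃ u : V, G.Adj v u)
    (S : Set V) (hS : IsTotalForcingSet G S) :
    ∀ v : V, IsStrongSupport G v →
      v ∈ S ∧ {x : V | G.Adj v x ∧ IsLeaf G x ∧ x ∉ S}.Subsingleton := by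
  intro v ⟨x, y, hxy, hvx, hvy, hlx, hly⟩
  have hsub : {x : V | G.Adj v x ∧ IsLeaf G x ∧ x ∉ S}.Subsingleton := by
    rintro a ⟨hva, hla, haS⟩ b ⟨hvb, hlb, hbS⟩
    by_contra hne
    exact aux G S v a (hS.1 a) ⟨haS, hla, hva, b, Ne.symm hne, hvb, hlb, hbS⟩
  refine ⟨?_, hsub⟩
  have hone : x ∈ S ∨ y ∈ S := by
    by_contra h
    push_neg at h
    exact aux G S v x (hS.1 x) ⟨h.1, hlx, hvx, y, hxy.symm, hvy, hly, h.2⟩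
  rcases hone with h | h
  · obtain ⟨u, huS, hadj⟩ := hS.2 x h
    rwa [leaf_unique hlx hadj hvx.symm] at huS
  · obtain ⟨u, huS, hadj⟩ := hS.2 y h
    rwa [leaf_unique hly hadj hvy.symm] at huS

end TotalForcing
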